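/- arXiv:math/0104026 — 4 statements merged into one kernel-verified Lean document; each statement's English description precedes it below -/
import Mathlib

section
/- For every nonnegative integer n, the sum over k from 0 to n of the inverse binomial coefficient C(n,k)^{-1} equals (n+1)/2^{n+1} times the sum over k from 1 to n+1 of 2^k/k. -/
open Finset

lemma key_choose (n k : ℕ) (hk : k ≤ n) :
    (((n+1).choose k : ℚ))⁻¹ + (((n+1).choose (k+1) : ℚ))⁻¹ =
      ((n : ℚ) + 2) / ((n : ℚ) + 1) * ((n.choose k : ℚ))⁻¹ := by
  have h1 : (n+1) * n.choose k = (n+1).choose (k+1) * (k+1) := by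
    simpa [Nat.succ_eq_add_one] using Nat.add_one_mul_choose_eq n k
  have h2 : (n+1) * n.choose k = (n+1).choose k * (n+1-k) := by
    have := Nat.add_one_mul_choose_eq n (n - k)
    rw [Nat.choose_symm hk] at this
    have hsym : (n+1).choose (n - k + 1) = (n+1).choose k := by
      have : n - k + 1 = (n+1) - k := by omega
      rw [this, Nat.choose_symm (by omega)]
    rw [hsym] at this
    have h3 : (n+1) * n.choose k = (n+1).choose k * (n - k + 1) := by
      simpa [Nat.succ_eq_add_one] using this
    have : n + 1 - k = n - k + 1 := by omega
    rw [this]; exact h3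
  have hc : (0:ℚ) < n.choose k := by exact_mod_cast Nat.choose_pos hk
  have hc1 : (0:ℚ) < (n+1).choose k := by exact_mod_cast Nat.choose_pos (by omega)
  have hc2 : (0:ℚ) < (n+1).choose (k+1) := by exact_mod_cast Nat.choose_pos (by omega)
  have q1 : ((n:ℚ)+1) * n.choose k = ((n+1).choose (k+1) : ℚ) * (k+1) := by
    exact_mod_cast h1
  have q2 : ((n:ℚ)+1) * n.choose k = ((n+1).choose k : ℚ) * ((n:ℚ)+1-k) := by
    have := h2
    have hcast : ((n+1) * n.choose k : ℚ) = ((n+1).choose k * (n+1-k) : ℕ) := by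
      exact_mod_cast congrArg (Nat.cast : ℕ → ℚ) this
    push_cast [Nat.cast_sub (by omega : k ≤ n+1)] at hcast
    linarith
  field_simp
  nlinarith [q1, q2, hc.le, hc1.le, hc2.le, mul_pos hc1 hc2]

theorem stmt_0 (n : ℕ) :
    ∑ k ∈ range (n + 1), ((n.choose k : ℚ))⁻¹ =
      ((n : ℚ) + 1) / 2 ^ (n + 1) * ∑ k ∈ Icc 1 (n + 1), (2 : ℚ) ^ k / k := by
  induction n with
  | zero => norm_num
  | succ n ih =>
    -- recurrence for LHS
    have hrec : ∑ k ∈ range (n + 2), (((n+1).choose k : ℚ))⁻¹ =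
        1 + ((n:ℚ)+2) / (2*((n:ℚ)+1)) * ∑ k ∈ range (n + 1), ((n.choose k : ℚ))⁻¹ := by
      have hsum : ∑ k ∈ range (n+1),
          ((((n+1).choose k : ℚ))⁻¹ + (((n+1).choose (k+1) : ℚ))⁻¹) =
          ((n:ℚ)+2) / ((n:ℚ)+1) * ∑ k ∈ range (n + 1), ((n.choose k : ℚ))⁻¹ := by
        rw [Finset.mul_sum]
        exact Finset.sum_congr rfl fun k hk => key_choose n k (by
          simpa [Nat.lt_succ_iff] using Finset.mem_range.mp hk)
      rw [Finset.sum_add_distrib] at hsum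
      have e1 : ∑ k ∈ range (n+2), (((n+1).choose k : ℚ))⁻¹ =
          (∑ k ∈ range (n+1), (((n+1).choose k : ℚ))⁻¹) + 1 := by
        rw [Finset.sum_range_succ]; simp
      have e2 : ∑ k ∈ range (n+2), (((n+1).choose k : ℚ))⁻¹ =
          (∑ k ∈ range (n+1), (((n+1).choose (k+1) : ℚ))⁻¹) + 1 := by
        rw [Finset.sum_range_succ']; simp
      have hn1 : ((n:ℚ)+1) ≠ 0 := by positivity
      have f1 : ∑ k ∈ range (n+1), (((n+1).choose k : ℚ))⁻¹ =
          ∑ k ∈ range (n+2), (((n+1).choose k : ℚ))⁻¹ - 1 := by linarith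
      have f2 : ∑ k ∈ range (n+1), (((n+1).choose (k+1) : ℚ))⁻¹ =
          ∑ k ∈ range (n+2), (((n+1).choose k : ℚ))⁻¹ - 1 := by linarith
      rw [f1, f2] at hsum
      field_simp at hsum ⊢
      linarith
    rw [hrec, ih]
    have hIcc : ∑ k ∈ Icc 1 (n + 2), (2 : ℚ) ^ k / k =
        (∑ k ∈ Icc 1 (n + 1), (2 : ℚ) ^ k / k) + 2^(n+2)/((n:ℚ)+2) := by
      have : n + 2 = (n + 1) + 1 := rfl
      rw [this, Finset.sum_Icc_succ_top (by omega)]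
      push_cast
      have h : ((n:ℚ) + 1 + 1) = (n:ℚ) + 2 := by ring
      rw [h]
    push_cast
    rw [hIcc]
    have h2 : (2:ℚ)^(n+1) ≠ 0 := by positivity
    have hn2 : ((n:ℚ)+2) ≠ 0 := by positivity
    have hn1 : ((n:ℚ)+1) ≠ 0 := by positivity
    field_simp
    ring
end

section
/- For every nonnegative integer n, the sum over k from 0 to n of C(n,k)^{-1} equals (n+1) times the sum over k from 0 to n of 1/((n+1-k)·2^k). -/
open Finset

lemma pair_id (n k : ℕ) (hk : k ≤ n) :
    (((n+1).choose k : ℚ))⁻¹ + (((n+1).choose (k+1) : ℚ))⁻¹ =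
      (((n:ℚ)+2)/((n:ℚ)+1)) * ((n.choose k : ℚ))⁻¹ := by
  have ha : (0:ℚ) < (n.choose k : ℚ) := by exact_mod_cast Nat.choose_pos hk
  have hb : (0:ℚ) < ((n+1).choose k : ℚ) := by exact_mod_cast Nat.choose_pos (by omega)
  have hc : (0:ℚ) < ((n+1).choose (k+1) : ℚ) := by exact_mod_cast Nat.choose_pos (by omega)
  have h1 : (n+2) * (n+1).choose k = (n+2).choose (k+1) * (k+1) := by
    have := Nat.add_one_mul_choose_eq (n+1) k
    simpa [Nat.succ_eq_add_one] using this
  have h2 : (n+1) * n.choose k = (n+1).choose (k+1) * (k+1) := by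
    have := Nat.add_one_mul_choose_eq n k
    simpa [Nat.succ_eq_add_one] using this
  have h1' : ((n:ℚ)+2) * ((n+1).choose k : ℚ) = ((n+2).choose (k+1) : ℚ) * ((k:ℚ)+1) := by
    exact_mod_cast congrArg (Nat.cast : ℕ → ℚ) h1
  have h2' : ((n:ℚ)+1) * (n.choose k : ℚ) = ((n+1).choose (k+1) : ℚ) * ((k:ℚ)+1) := by
    exact_mod_cast congrArg (Nat.cast : ℕ → ℚ) h2
  have hpascal : ((n+1).choose k : ℚ) + ((n+1).choose (k+1) : ℚ) = ((n+2).choose (k+1) : ℚ) := by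
    have : (n+2).choose (k+1) = (n+1).choose k + (n+1).choose (k+1) :=
      Nat.choose_succ_succ (n+1) k
    exact_mod_cast this.symm
  have hn1 : ((n:ℚ)+1) ≠ 0 := by positivity
  field_simp
  linear_combination ((n+2).choose (k+1) : ℚ) * h2' - ((n+1).choose (k+1) : ℚ) * h1'
    + hpascal * (((n:ℚ)+1) * (n.choose k : ℚ))

lemma f_rec (n : ℕ) :
    ∑ k ∈ range (n+2), (((n+1).choose k : ℚ))⁻¹ =
      1 + (((n:ℚ)+2)/(2*((n:ℚ)+1))) * ∑ k ∈ range (n+1), ((n.choose k : ℚ))⁻¹ := by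
  have hsum : ∑ k ∈ range (n+1),
      ((((n+1).choose k : ℚ))⁻¹ + (((n+1).choose (k+1) : ℚ))⁻¹) =
      (((n:ℚ)+2)/((n:ℚ)+1)) * ∑ k ∈ range (n+1), ((n.choose k : ℚ))⁻¹ := by
    rw [mul_sum]
    exact Finset.sum_congr rfl fun k hk => pair_id n k (by
      have := Finset.mem_range.mp hk; omega)
  rw [Finset.sum_add_distrib] at hsum
  have hA : ∑ k ∈ range (n+2), (((n+1).choose k : ℚ))⁻¹ =
      (∑ k ∈ range (n+1), (((n+1).choose k : ℚ))⁻¹) + 1 := by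
    rw [Finset.sum_range_succ]; simp
  have hB : ∑ k ∈ range (n+2), (((n+1).choose k : ℚ))⁻¹ =
      (∑ k ∈ range (n+1), (((n+1).choose (k+1) : ℚ))⁻¹) + 1 := by
    rw [Finset.sum_range_succ']; simp [add_comm]
  set F := ∑ k ∈ range (n+2), (((n+1).choose k : ℚ))⁻¹ with hF
  have hn1 : ((n:ℚ)+1) ≠ 0 := by positivity
  have : (F - 1) + (F - 1) = (((n:ℚ)+2)/((n:ℚ)+1)) * ∑ k ∈ range (n+1), ((n.choose k : ℚ))⁻¹ := by
    rw [← hsum]; linarith [hA, hB]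
  field_simp at this ⊢
  linarith

theorem stmt_1 (n : ℕ) :
    ∑ k ∈ range (n + 1), ((n.choose k : ℚ))⁻¹ =
      ((n : ℚ) + 1) * ∑ k ∈ range (n + 1), 1 / (((n : ℚ) + 1 - k) * 2 ^ k) := by
  induction n with
  | zero => norm_num
  | succ n ih =>
    have hrec := f_rec n
    have hg : ∑ k ∈ range (n+2), 1 / ((((n+1:ℕ) : ℚ) + 1 - k) * 2 ^ k) =
        (1/2) * (∑ k ∈ range (n+1), 1 / (((n:ℚ)+1-k) * 2^k)) + 1/((n:ℚ)+2) := by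
      rw [Finset.sum_range_succ']
      push_cast
      rw [Finset.mul_sum]
      refine congrArg₂ (· + ·) ?_ (by norm_num; ring)
      · refine Finset.sum_congr rfl fun k hk => ?_
        have hk' : (k:ℚ) ≤ n := by
          have := Finset.mem_range.mp hk; exact_mod_cast Nat.le_of_lt_succ this
        have h2k : (2:ℚ)^k ≠ 0 := by positivity
        have hd : ((n:ℚ)+1-k) ≠ 0 := by
          intro h; nlinarith [h]
        field_simp
        have hX : (1+(n:ℚ)-k)*(1+(n:ℚ)-k)⁻¹ = 1 := mul_inv_cancel₀ (by intro h; apply hd; linarith)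
        linear_combination (2^k*2) * hX
    have hn1 : ((n:ℚ)+1) ≠ 0 := by positivity
    have hn2 : ((n:ℚ)+2) ≠ 0 := by positivity
    calc ∑ k ∈ range (n+1+1), (((n+1).choose k : ℚ))⁻¹
        = 1 + (((n:ℚ)+2)/(2*((n:ℚ)+1))) * ∑ k ∈ range (n+1), ((n.choose k : ℚ))⁻¹ := hrec
      _ = 1 + (((n:ℚ)+2)/(2*((n:ℚ)+1))) * (((n:ℚ)+1) * ∑ k ∈ range (n+1), 1 / (((n:ℚ)+1-k) * 2^k)) := by rw [ih]
      _ = ((n:ℚ)+2) * ((1/2) * (∑ k ∈ range (n+1), 1 / (((n:ℚ)+1-k) * 2^k)) + 1/((n:ℚ)+2)) := by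
          field_simp; ring
      _ = (((n+1:ℕ):ℚ) + 1) * ∑ k ∈ range (n+2), 1 / ((((n+1:ℕ):ℚ) + 1 - k) * 2^k) := by
          rw [hg]; push_cast; ring
end

section
/- For every nonnegative integer n, the sum over k from 0 to n of k·C(n,k)^{-1} equals (1/2^n)·[(n+1)(2^n - 1) + Σ_{k=0}^{n-2} (n-k)(n-k-1)·2^{k-1}/(k+1)]. -/
open Finset

lemma pair_inv (n k : ℕ) (hk : k ≤ n) :
    ((n+1).choose k : ℚ)⁻¹ + ((n+1).choose (k+1) : ℚ)⁻¹
      = ((n:ℚ)+2) / ((n:ℚ)+1) * (n.choose k : ℚ)⁻¹ := by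
  have h1 : ((n:ℚ)+1) * (n.choose k : ℚ) = ((n+1).choose (k+1) : ℚ) * ((k:ℚ)+1) := by
    exact_mod_cast congrArg (Nat.cast (R := ℚ)) (Nat.add_one_mul_choose_eq n k)
  have h2 : ((n+1).choose (k+1) : ℚ) * ((k:ℚ)+1) = ((n+1).choose k : ℚ) * (((n:ℚ)+1) - k) := by
    have h := Nat.choose_succ_right_eq (n+1) k
    have h' : (((n+1).choose (k+1) * (k+1) : ℕ) : ℚ) = (((n+1).choose k * ((n+1) - k) : ℕ) : ℚ) := by
      exact_mod_cast congrArg (Nat.cast (R := ℚ)) h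
    push_cast [Nat.cast_sub (le_trans hk (Nat.le_succ n))] at h'
    linarith
  have c0 : (n.choose k : ℚ) ≠ 0 := by exact_mod_cast Nat.choose_pos hk |>.ne'
  have c1 : ((n+1).choose k : ℚ) ≠ 0 := by
    exact_mod_cast Nat.choose_pos (le_trans hk (Nat.le_succ n)) |>.ne'
  have c2 : ((n+1).choose (k+1) : ℚ) ≠ 0 := by
    exact_mod_cast Nat.choose_pos (Nat.succ_le_succ hk) |>.ne'
  have hn1 : ((n:ℚ)+1) ≠ 0 := by positivity
  field_simp
  nlinarith [h1, h2]

lemma classic (n : ℕ) :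
    ∑ k ∈ range (n+1), (n.choose k : ℚ)⁻¹
      = ((n:ℚ)+1) / 2^n * ∑ k ∈ range (n+1), (2:ℚ)^k / ((k:ℚ)+1) := by
  induction n with
  | zero => norm_num
  | succ n ih =>
    have key : 2 * ∑ k ∈ range (n+2), ((n+1).choose k : ℚ)⁻¹
        = ((n:ℚ)+2) / ((n:ℚ)+1) * (∑ k ∈ range (n+1), (n.choose k : ℚ)⁻¹) + 2 := by
      have e1 := Finset.sum_range_succ (fun k => ((n+1).choose k : ℚ)⁻¹) (n+1)
      have e2 := Finset.sum_range_succ' (fun k => ((n+1).choose k : ℚ)⁻¹) (n+1)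
      have e3 : ∑ k ∈ range (n+1), (((n+1).choose k : ℚ)⁻¹ + ((n+1).choose (k+1) : ℚ)⁻¹)
          = ∑ k ∈ range (n+1), ((n:ℚ)+2) / ((n:ℚ)+1) * (n.choose k : ℚ)⁻¹ :=
        Finset.sum_congr rfl (fun k hk => pair_inv n k (Nat.lt_succ_iff.mp (mem_range.mp hk)))
      rw [Finset.sum_add_distrib] at e3
      rw [← Finset.mul_sum] at e3
      simp [Nat.choose_self] at e1 e2
      nlinarith [e1, e2, e3]
    have hn1 : ((n:ℚ)+1) ≠ 0 := by positivity
    have hp : (2:ℚ)^n ≠ 0 := by positivity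
    rw [ih] at key
    rw [Finset.sum_range_succ (fun k => (2:ℚ)^k / ((k:ℚ)+1)) (n+1)]
    have hn2 : ((n:ℚ)+2) ≠ 0 := by positivity
    push_cast at key ⊢
    set A := ∑ k ∈ range (n+1), (2:ℚ)^k / ((k:ℚ)+1) with hA
    set S := ∑ k ∈ range (n+1+1), (((n:ℕ)+1).choose k : ℚ)⁻¹ with hS
    have key2 : 2*S*(2:ℚ)^n = ((n:ℚ)+2)*A + 2*2^n := by
      apply mul_left_cancel₀ hn1
      field_simp at key
      linear_combination ((n:ℚ)+1) * key
    field_simp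
    linear_combination key2

lemma sym_sum (n : ℕ) :
    ∑ k ∈ range (n+1), (k:ℚ) * (n.choose k : ℚ)⁻¹
      = (n:ℚ)/2 * ∑ k ∈ range (n+1), (n.choose k : ℚ)⁻¹ := by
  have hrefl := Finset.sum_range_reflect (fun k => (k:ℚ) * (n.choose k : ℚ)⁻¹) (n+1)
  simp only [Nat.add_sub_cancel] at hrefl
  have hrw : ∑ j ∈ range (n+1), ((n - j : ℕ) : ℚ) * (n.choose (n - j) : ℚ)⁻¹
      = ∑ j ∈ range (n+1), ((n:ℚ) - j) * (n.choose j : ℚ)⁻¹ := by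
    refine Finset.sum_congr rfl (fun j hj => ?_)
    have hj' : j ≤ n := Nat.lt_succ_iff.mp (mem_range.mp hj)
    rw [Nat.choose_symm hj', Nat.cast_sub hj']
  rw [hrw] at hrefl
  have : ∑ k ∈ range (n+1), (k:ℚ) * (n.choose k : ℚ)⁻¹
      + ∑ k ∈ range (n+1), (k:ℚ) * (n.choose k : ℚ)⁻¹
      = ∑ k ∈ range (n+1), (n:ℚ) * (n.choose k : ℚ)⁻¹ := by
    nth_rewrite 1 [← hrefl]
    rw [← Finset.sum_add_distrib]
    exact Finset.sum_congr rfl (fun j _ => by ring)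
  rw [← Finset.mul_sum] at this
  linarith

lemma geom_sum' (c : ℚ) (m : ℕ) :
    ∑ k ∈ range m, (c - (k:ℚ)) * (2:ℚ)^k
      = c * (2^m - 1) - ((m:ℚ) - 2) * 2^m - 2 := by
  induction m with
  | zero => norm_num
  | succ m ih =>
    rw [Finset.sum_range_succ, ih]
    push_cast
    ring

theorem stmt_5 (n : ℕ) :
    ∑ k ∈ range (n + 1), (k : ℚ) * ((n.choose k : ℚ))⁻¹ =
      (1 / 2 ^ n) * (((n : ℚ) + 1) * (2 ^ n - 1) +
        ∑ k ∈ range (n - 1),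
          ((n : ℚ) - k) * ((n : ℚ) - k - 1) * (2 : ℚ) ^ ((k : ℤ) - 1) / (k + 1)) := by
  match n with
  | 0 => simp
  | 1 => simp [Finset.sum_range_succ]; norm_num
  | (m+2) =>
  set n := m + 2 with hn
  rw [sym_sum, classic]
  have hrange : n - 1 = m + 1 := rfl
  rw [hrange]
  have hterm : ∀ k ∈ range (m+1),
      ((n : ℚ) - k) * ((n : ℚ) - k - 1) * (2 : ℚ) ^ ((k : ℤ) - 1) / (k + 1)
        = (n:ℚ)*((n:ℚ)+1)/2 * ((2:ℚ)^k / ((k:ℚ)+1)) - (1/2) * ((2*(n:ℚ) - k) * (2:ℚ)^k) := by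
    intro k _
    have h2 : (2 : ℚ) ^ ((k : ℤ) - 1) = 2^k / 2 := by
      rw [zpow_sub₀ (by norm_num : (2:ℚ) ≠ 0), zpow_natCast, zpow_one]
    have hk1 : ((k:ℚ)+1) ≠ 0 := by positivity
    rw [h2]
    field_simp
    ring
  rw [Finset.sum_congr rfl hterm, Finset.sum_sub_distrib, ← Finset.mul_sum, ← Finset.mul_sum,
    geom_sum' (2*(n:ℚ)) (m+1)]
  have hsplit : ∑ k ∈ range (n+1), (2:ℚ)^k / ((k:ℚ)+1)
      = ∑ k ∈ range (m+1), (2:ℚ)^k / ((k:ℚ)+1)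
        + 2^(m+1)/((m:ℚ)+2) + 2^(m+2)/((m:ℚ)+3) := by
    show ∑ k ∈ range (m+3), (2:ℚ)^k / ((k:ℚ)+1) = _
    rw [Finset.sum_range_succ, Finset.sum_range_succ]
    push_cast
    ring
  rw [hsplit]
  have hm2 : ((m:ℚ)+2) ≠ 0 := by positivity
  have hm3 : ((m:ℚ)+3) ≠ 0 := by positivity
  have hp : (2:ℚ)^m ≠ 0 := by positivity
  have hnq : (n:ℚ) = (m:ℚ) + 2 := by rw [hn]; push_cast; ring
  rw [hnq]
  have hpow : (2:ℚ)^n = 4 * 2^m := by rw [hn]; ring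
  rw [hpow]
  set A := ∑ k ∈ range (m+1), (2:ℚ)^k / ((k:ℚ)+1) with hA
  field_simp
  push_cast
  ring
end

section
/- For every nonnegative integer n, the sum over k from 0 to n of C(n,k)^{-2} equals (n+1)^2 times the sum over k from 0 to n of 2/(n-k+1) times Σ_{i=0}^{k} (-1)^i/(n+2+i) · C(k,i). -/
open Finset

private lemma factq (m : ℕ) : ((m.factorial : ℚ)) ≠ 0 := by
  exact_mod_cast m.factorial_ne_zero

private lemma inner_lemma (k : ℕ) : ∀ n : ℕ,
    ∑ i ∈ range (k + 1), (-1 : ℚ) ^ i / ((n : ℚ) + 2 + i) * (k.choose i : ℚ) =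
      (k.factorial : ℚ) * ((n + 1).factorial : ℚ) / ((n + k + 2).factorial : ℚ) := by
  induction k with
  | zero =>
    intro n
    rw [show (n + 0 + 2) = (n + 1) + 1 from by omega, Nat.factorial_succ (n+1),
      Nat.factorial_succ n]
    have hne : ((n : ℚ) + 2) ≠ 0 := by positivity
    rw [Finset.sum_range_one]
    push_cast
    field_simp
    simp only [Nat.choose_self, Nat.cast_one]
    ring
  | succ k ih =>
    intro n
    have s1 : ∑ i ∈ range (k+1), (-1:ℚ)^i/((n:ℚ)+3+i)*(k.choose i : ℚ)
        = (k.factorial : ℚ) * ((n+2).factorial : ℚ) / ((n+k+3).factorial : ℚ) := by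
      have h := ih (n+1)
      have e : ∀ i ∈ range (k+1), (-1:ℚ)^i/(((n+1:ℕ):ℚ)+2+i)*(k.choose i : ℚ)
          = (-1:ℚ)^i/((n:ℚ)+3+i)*(k.choose i : ℚ) := by
        intro i _; push_cast; ring_nf
      rw [Finset.sum_congr rfl e] at h
      rw [h, show n+1+k+2 = n+k+3 from by omega]
    calc ∑ i ∈ range (k+2), (-1:ℚ)^i/((n:ℚ)+2+i)*((k+1).choose i : ℚ)
        = (∑ i ∈ range (k+1), ((-1:ℚ)^(i+1)/((n:ℚ)+2+(i+1))*(k.choose (i+1) : ℚ)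
            - (-1:ℚ)^i/((n:ℚ)+3+i)*(k.choose i : ℚ)))
          + (-1:ℚ)^0/((n:ℚ)+2+(0:ℕ))*(k.choose 0 : ℚ) := by
          rw [Finset.sum_range_succ']
          congr 1
          · apply Finset.sum_congr rfl; intro i _
            rw [Nat.choose_succ_succ]
            push_cast
            ring
          · norm_num
      _ = (∑ i ∈ range (k+2), (-1:ℚ)^i/((n:ℚ)+2+i)*(k.choose i : ℚ))
            - ∑ i ∈ range (k+1), (-1:ℚ)^i/((n:ℚ)+3+i)*(k.choose i : ℚ) := by
          rw [Finset.sum_sub_distrib,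
            Finset.sum_range_succ' (fun i => (-1:ℚ)^i/((n:ℚ)+2+i)*(k.choose i : ℚ)) (k+1)]
          push_cast
          ring
      _ = (∑ i ∈ range (k+1), (-1:ℚ)^i/((n:ℚ)+2+i)*(k.choose i : ℚ))
            - ∑ i ∈ range (k+1), (-1:ℚ)^i/((n:ℚ)+3+i)*(k.choose i : ℚ) := by
          rw [Finset.sum_range_succ]
          simp
      _ = ((k+1).factorial : ℚ) * ((n + 1).factorial : ℚ) / ((n + (k+1) + 2).factorial : ℚ) := by
          rw [ih n, s1, show n+(k+1)+2 = (n+k+2)+1 from by omega,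
            show n+k+3 = (n+k+2)+1 from by omega, show (n+2) = (n+1)+1 from by omega,
            Nat.factorial_succ (n+k+2), Nat.factorial_succ (n+1), Nat.factorial_succ k]
          have h1 : (((n+k+2).factorial : ℚ)) ≠ 0 := factq _
          have h3 : (((n+1).factorial : ℚ)) ≠ 0 := factq _
          push_cast
          have h2 : ((n:ℚ) + (k:ℚ) + 2 + 1) ≠ 0 := by positivity
          have h4 : ((n:ℚ) + (k:ℚ) + 3) ≠ 0 := by positivity
          field_simp
          ring

private lemma ptA (n k : ℕ) (h : k < n) :
    2 * ((n:ℚ)+1)^2 * (2*(n:ℚ)+5) * (((n+1).choose k : ℚ))⁻¹ ^ 2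
      - ((n:ℚ)+2)^3 * ((n.choose k : ℚ))⁻¹ ^ 2
    = ((n:ℚ)+1-((k:ℚ)+1))^2 * (2*((k:ℚ)+1)-3*((n:ℚ)+2)) * ((n.choose (k+1) : ℚ))⁻¹ ^ 2
      - ((n:ℚ)+1-(k:ℚ))^2 * (2*(k:ℚ)-3*((n:ℚ)+2)) * ((n.choose k : ℚ))⁻¹ ^ 2 := by
  have hkn : (k:ℚ) < (n:ℚ) := by exact_mod_cast h
  have c0 : ((n.choose k : ℚ)) ≠ 0 := by
    exact_mod_cast (Nat.choose_pos h.le).ne'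
  have c1 : ((n.choose (k+1) : ℚ)) ≠ 0 := by
    exact_mod_cast (Nat.choose_pos (by omega : k+1 ≤ n)).ne'
  have c2 : (((n+1).choose k : ℚ)) ≠ 0 := by
    exact_mod_cast (Nat.choose_pos (by omega : k ≤ n+1)).ne'
  have d1 : ((n:ℚ) - k) ≠ 0 := sub_ne_zero.mpr (ne_of_gt hkn)
  have d2 : ((n:ℚ) + 1 - k) ≠ 0 := by
    have : (k:ℚ) < (n:ℚ)+1 := by linarith
    exact sub_ne_zero.mpr (ne_of_gt this)
  have dk : ((k:ℚ) + 1) ≠ 0 := by positivity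
  have r1 : ((n.choose (k+1) : ℚ)) * ((k:ℚ)+1) = (n.choose k : ℚ) * ((n:ℚ) - k) := by
    have := Nat.choose_succ_right_eq n k
    have hc : ((n.choose (k+1) * (k+1) : ℕ) : ℚ) = ((n.choose k * (n - k) : ℕ) : ℚ) := by
      exact_mod_cast congrArg (Nat.cast (R := ℚ)) this
    push_cast [Nat.cast_sub h.le] at hc
    linarith [hc]
  have r2 : ((n.choose k : ℚ)) * ((n:ℚ)+1) = (((n+1).choose k : ℚ)) * ((n:ℚ)+1-k) := by
    have := Nat.choose_mul_succ_eq n k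
    have hc : ((n.choose k * (n+1) : ℕ) : ℚ) = (((n+1).choose k * (n+1-k) : ℕ) : ℚ) := by
      exact_mod_cast congrArg (Nat.cast (R := ℚ)) this
    push_cast [Nat.cast_sub (by omega : k ≤ n+1)] at hc
    linarith [hc]
  have e1 : ((n.choose (k+1) : ℚ)) = (n.choose k : ℚ) * ((n:ℚ) - k) / ((k:ℚ)+1) := by
    field_simp
    linarith [r1]
  have e2 : (((n+1).choose k : ℚ)) = (n.choose k : ℚ) * ((n:ℚ)+1) / ((n:ℚ)+1-k) := by
    field_simp
    linarith [r2]
  rw [e1, e2]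
  have hn1 : ((n:ℚ)+1) ≠ 0 := by positivity
  field_simp
  ring

private lemma sumA (n : ℕ) :
    2*((n:ℚ)+1)^2*(2*(n:ℚ)+5) * (∑ k ∈ range (n+2), (((n+1).choose k : ℚ))⁻¹ ^ 2)
    = ((n:ℚ)+2)^3 * (∑ k ∈ range (n+1), ((n.choose k : ℚ))⁻¹ ^ 2)
      + 6*((n:ℚ)+1)^2*((n:ℚ)+2) := by
  have hn : ((n:ℚ)+1) ≠ 0 := by positivity
  have tele := Finset.sum_range_sub
    (fun j : ℕ => ((n:ℚ)+1-(j:ℚ))^2*(2*(j:ℚ)-3*((n:ℚ)+2))*((n.choose j : ℚ))⁻¹^2) n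
  have key : ∑ k ∈ range n,
      (2*((n:ℚ)+1)^2*(2*(n:ℚ)+5) * (((n+1).choose k : ℚ))⁻¹ ^ 2
        - ((n:ℚ)+2)^3 * ((n.choose k : ℚ))⁻¹ ^ 2)
      = ((n:ℚ)+1-(n:ℚ))^2*(2*(n:ℚ)-3*((n:ℚ)+2))*((n.choose n : ℚ))⁻¹^2
        - ((n:ℚ)+1-((0:ℕ):ℚ))^2*(2*((0:ℕ):ℚ)-3*((n:ℚ)+2))*((n.choose 0 : ℚ))⁻¹^2 := by
    rw [← tele]
    apply Finset.sum_congr rfl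
    intro k hk
    have p := ptA n k (mem_range.mp hk)
    push_cast
    push_cast at p
    linear_combination p
  rw [Finset.sum_sub_distrib, ← Finset.mul_sum, ← Finset.mul_sum] at key
  simp only [Nat.choose_self, Nat.choose_zero_right, Nat.cast_one, inv_one, one_pow,
    Nat.cast_zero] at key
  rw [Finset.sum_range_succ, Finset.sum_range_succ, Finset.sum_range_succ]
  simp only [Nat.choose_self, Nat.choose_succ_self_right, Nat.cast_one, inv_one, one_pow]
  have hu : ((n:ℚ)+1) * (((n+1 : ℕ) : ℚ))⁻¹ = 1 := by
    push_cast
    exact mul_inv_cancel₀ hn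
  push_cast at hu ⊢
  linear_combination key + 2*(2*(n:ℚ)+5)*(((n:ℚ)+1)*((n:ℚ)+1)⁻¹+1)*hu

private noncomputable def hq (n k : ℕ) : ℚ :=
  (k.factorial : ℚ) * ((n+1).factorial : ℚ) / (((n:ℚ) - k + 1) * ((n+k+2).factorial : ℚ))

private noncomputable def Yc (n : ℕ) (j : ℚ) : ℚ :=
  ((n:ℚ)+2) * (3*((n:ℚ)+1)*((n:ℚ)+2) - (4*(n:ℚ)+7)*j + j^2) / ((n:ℚ) - j + 2)

private lemma ptB (n k : ℕ) (h : k < n) :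
    ((n:ℚ)+2)^2 * hq n k - 2*((n:ℚ)+2)*(2*(n:ℚ)+5) * hq (n+1) k
    = Yc n ((k:ℚ)+1) * hq n (k+1) - Yc n (k:ℚ) * hq n k := by
  have hkn : (k:ℚ) < (n:ℚ) := by exact_mod_cast h
  unfold hq Yc
  rw [show (n+1)+k+2 = (n+k+2)+1 from by omega,
      show n+(k+1)+2 = (n+k+2)+1 from by omega,
      Nat.factorial_succ (n+k+2), Nat.factorial_succ (n+1), Nat.factorial_succ k]
  have h1 : (((n+k+2).factorial : ℚ)) ≠ 0 := factq _
  have h3 : (((n+1).factorial : ℚ)) ≠ 0 := factq _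
  have h5 : ((k.factorial : ℚ)) ≠ 0 := factq _
  push_cast
  have d1 : ((n:ℚ) - k) ≠ 0 := sub_ne_zero.mpr (ne_of_gt hkn)
  have d2 : ((n:ℚ) - k + 1) ≠ 0 := by
    have : (0:ℚ) < (n:ℚ) - k + 1 := by linarith
    exact this.ne'
  have d3 : ((n:ℚ) - k + 2) ≠ 0 := by
    have : (0:ℚ) < (n:ℚ) - k + 2 := by linarith
    exact this.ne'
  have d4 : ((n:ℚ) - (k+1) + 1) ≠ 0 := by
    have : (0:ℚ) < (n:ℚ) - (k+1) + 1 := by linarith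
    exact this.ne'
  have d5 : ((n:ℚ) - (k+1) + 2) ≠ 0 := by
    have : (0:ℚ) < (n:ℚ) - (k+1) + 2 := by linarith
    exact this.ne'
  have d6 : ((n:ℚ)+1) - k + 1 ≠ 0 := by
    have : (0:ℚ) < ((n:ℚ)+1) - k + 1 := by linarith
    exact this.ne'
  have d7 : ((n:ℚ) + k + 2 + 1) ≠ 0 := by positivity
  field_simp
  ring

private lemma v0 (n : ℕ) : hq n 0 = 1/(((n:ℚ)+1)*((n:ℚ)+2)) := by
  unfold hq
  rw [show n+0+2 = (n+1)+1 from by omega, Nat.factorial_succ (n+1), Nat.factorial_succ n]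
  have h3 : ((n.factorial : ℚ)) ≠ 0 := factq _
  push_cast
  have h1 : ((n:ℚ)+1) ≠ 0 := by positivity
  have h2 : ((n:ℚ)+2) ≠ 0 := by positivity
  field_simp
  ring

private lemma vn (n : ℕ) : hq n n = (n.factorial:ℚ)*((n+1).factorial:ℚ)/((n+n+2).factorial:ℚ) := by
  unfold hq
  have : (n:ℚ) - n + 1 = 1 := by ring
  rw [this, one_mul]

private lemma w1 (n : ℕ) : hq (n+1) n
    = ((n:ℚ)+2) * (n.factorial:ℚ)*((n+1).factorial:ℚ)
      / (2*(2*(n:ℚ)+3)*((n+n+2).factorial:ℚ)) := by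
  unfold hq
  rw [show n+1+n+2 = (n+n+2)+1 from by omega, Nat.factorial_succ (n+n+2),
    Nat.factorial_succ (n+1)]
  have h1 : (((n+n+2).factorial : ℚ)) ≠ 0 := factq _
  have h3 : (((n+1).factorial : ℚ)) ≠ 0 := factq _
  push_cast
  have h2 : ((n:ℚ)+(n:ℚ)+2+1) ≠ 0 := by positivity
  have h4 : ((n:ℚ)+1-(n:ℚ)+1) ≠ 0 := by
    have : ((n:ℚ)+1-(n:ℚ)+1) = 2 := by ring
    rw [this]; norm_num
  have h5 : (2*(n:ℚ)+3) ≠ 0 := by positivity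
  field_simp
  ring

private lemma w2 (n : ℕ) : hq (n+1) (n+1)
    = ((n:ℚ)+1)*((n:ℚ)+2) * (n.factorial:ℚ)*((n+1).factorial:ℚ)
      / ((2*(n:ℚ)+3)*(2*(n:ℚ)+4)*((n+n+2).factorial:ℚ)) := by
  unfold hq
  rw [show n+1+(n+1)+2 = ((n+n+2)+1)+1 from by omega, Nat.factorial_succ ((n+n+2)+1),
    Nat.factorial_succ (n+n+2), Nat.factorial_succ (n+1), Nat.factorial_succ n]
  have h1 : (((n+n+2).factorial : ℚ)) ≠ 0 := factq _
  have h3 : ((n.factorial : ℚ)) ≠ 0 := factq _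
  push_cast
  have h2 : ((n:ℚ)+(n:ℚ)+2+1) ≠ 0 := by positivity
  have h6 : ((n:ℚ)+(n:ℚ)+2+1+1) ≠ 0 := by positivity
  have h4 : ((n:ℚ)+1-((n:ℚ)+1)+1) ≠ 0 := by
    have : ((n:ℚ)+1-((n:ℚ)+1)+1) = 1 := by ring
    rw [this]; norm_num
  have h5 : (2*(n:ℚ)+3) ≠ 0 := by positivity
  have h7 : (2*(n:ℚ)+4) ≠ 0 := by positivity
  field_simp
  ring

private lemma Ycn (n : ℕ) : Yc n (n:ℚ) = ((n:ℚ)+2)*((n:ℚ)+3) := by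
  unfold Yc
  have : (n:ℚ) - n + 2 = 2 := by ring
  rw [this]
  field_simp
  ring

private lemma Yc0 (n : ℕ) : Yc n ((0:ℕ):ℚ) = 3*((n:ℚ)+1)*((n:ℚ)+2) := by
  unfold Yc
  have h2 : ((n:ℚ)+2) ≠ 0 := by positivity
  push_cast
  have : (n:ℚ) - 0 + 2 = (n:ℚ)+2 := by ring
  rw [this]
  field_simp
  ring

private lemma sumB (n : ℕ) :
    2*((n:ℚ)+2)*(2*(n:ℚ)+5) * (∑ k ∈ range (n+2), hq (n+1) k)
    = ((n:ℚ)+2)^2 * (∑ k ∈ range (n+1), hq n k) + 3 := by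
  have tele := Finset.sum_range_sub (fun j : ℕ => Yc n (j:ℚ) * hq n j) n
  have key : ∑ k ∈ range n,
      (((n:ℚ)+2)^2 * hq n k - 2*((n:ℚ)+2)*(2*(n:ℚ)+5) * hq (n+1) k)
      = Yc n (n:ℚ) * hq n n - Yc n ((0:ℕ):ℚ) * hq n 0 := by
    rw [← tele]
    apply Finset.sum_congr rfl
    intro k hk
    have p := ptB n k (mem_range.mp hk)
    push_cast
    push_cast at p
    linear_combination p
  rw [Finset.sum_sub_distrib, ← Finset.mul_sum, ← Finset.mul_sum] at key
  have bnd : 2*((n:ℚ)+2)*(2*(n:ℚ)+5)*(hq (n+1) n + hq (n+1) (n+1))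
      = ((n:ℚ)+2)^2 * hq n n + 3 + Yc n (n:ℚ) * hq n n - Yc n ((0:ℕ):ℚ) * hq n 0 := by
    rw [v0 n, w2 n, w1 n, vn n, Ycn n, Yc0 n]
    have h1 : (((n+n+2).factorial : ℚ)) ≠ 0 := factq _
    have h2 : ((n:ℚ)+1) ≠ 0 := by positivity
    have h3 : ((n:ℚ)+2) ≠ 0 := by positivity
    have h5 : (2*(n:ℚ)+3) ≠ 0 := by positivity
    have h7 : (2*(n:ℚ)+4) ≠ 0 := by positivity
    have fact2 : ((n+n+2).factorial : ℚ)
        = ((n:ℚ)+(n:ℚ)+2)*((n:ℚ)+(n:ℚ)+1)*(((n+n).factorial:ℚ)) := by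
      rw [show n+n+2 = ((n+n)+1)+1 from by omega, Nat.factorial_succ ((n+n)+1),
        Nat.factorial_succ (n+n)]
      push_cast
      ring
    field_simp
    ring
  rw [Finset.sum_range_succ, Finset.sum_range_succ, Finset.sum_range_succ]
  linear_combination bnd - key

private lemma main_eq (n : ℕ) :
    ∑ k ∈ range (n+1), ((n.choose k : ℚ))⁻¹ ^ 2
      = 2*((n:ℚ)+1)^2 * ∑ k ∈ range (n+1), hq n k := by
  induction n with
  | zero =>
    rw [Finset.sum_range_one, Finset.sum_range_one]
    unfold hq
    norm_num [Nat.factorial]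
  | succ n ih =>
    have hA := sumA n
    have hB := sumB n
    have hnz : (2*((n:ℚ)+1)^2*(2*(n:ℚ)+5)) ≠ 0 := by positivity
    have big : (2*((n:ℚ)+1)^2*(2*(n:ℚ)+5)) * (∑ k ∈ range (n+2), (((n+1).choose k : ℚ))⁻¹ ^ 2)
        = (2*((n:ℚ)+1)^2*(2*(n:ℚ)+5)) * (2*((n:ℚ)+2)^2 * ∑ k ∈ range (n+2), hq (n+1) k) := by
      linear_combination hA + ((n:ℚ)+2)^3 * ih - 2*((n:ℚ)+1)^2*((n:ℚ)+2) * hB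
    have := mul_left_cancel₀ hnz big
    push_cast
    push_cast at this
    linear_combination this

theorem stmt_10 (n : ℕ) :
    ∑ k ∈ range (n + 1), (((n.choose k : ℚ))⁻¹) ^ 2 =
      ((n : ℚ) + 1) ^ 2 * ∑ k ∈ range (n + 1),
        2 / ((n : ℚ) - k + 1) *
          ∑ i ∈ range (k + 1), (-1 : ℚ) ^ i / ((n : ℚ) + 2 + i) * (k.choose i : ℚ) := by
  have hterm : ∀ k ∈ range (n+1),
      2 / ((n : ℚ) - k + 1) *
        ∑ i ∈ range (k + 1), (-1 : ℚ) ^ i / ((n : ℚ) + 2 + i) * (k.choose i : ℚ)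
      = 2 * hq n k := by
    intro k hk
    have hk' : k ≤ n := by
      have := mem_range.mp hk; omega
    rw [inner_lemma k n]
    unfold hq
    have hd : ((n:ℚ) - k + 1) ≠ 0 := by
      have h1 : (k:ℚ) ≤ (n:ℚ) := by exact_mod_cast hk'
      have : (0:ℚ) < (n:ℚ) - k + 1 := by linarith
      exact this.ne'
    have h1 : (((n+k+2).factorial : ℚ)) ≠ 0 := factq _
    field_simp
  rw [Finset.sum_congr rfl hterm, ← Finset.mul_sum, main_eq n]
  ring
end
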